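/- The natural map ⊕_{n∈ℕ} ℤ → Hom(Hom(⊕_{n∈ℕ} ℤ, ℤ), ℤ), i.e. the evaluation map into the double dual, is an isomorphism; equivalently, Hom(∏_{n∈ℕ} ℤ, ℤ) ≅ ⊕_{n∈ℕ} ℤ, with the isomorphism given by restriction of functionals on ∏_ℕ ℤ to finitely supported sequences (this is the Specker theorem). -/

import Mathlib

/-- Core combinatorial lemma behind Specker's theorem. -/
theorem specker_core (φ : (ℕ → ℤ) →+ ℤ) (y : ℕ → ℕ → ℤ)
    (hy : ∀ k j, j < k → y k j = 0) : ∃ k, φ (y k) = 0 := by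
  by_contra hco
  push_neg at hco
  set c : ℕ → ℤ := fun k => φ (y k) with hc
  have hc1 : ∀ k, 1 ≤ |c k| := fun k => Int.one_le_abs (hco k)
  set SN : ℕ → ℤ × ℤ := fun n => Nat.rec ((0 : ℤ), (1 : ℤ))
    (fun K p => (p.1 + p.2 * c K, p.2 * (2 * |p.1 + p.2 * c K| + 1))) n with hSN
  set S : ℕ → ℤ := fun n => (SN n).1 with hS
  set N : ℕ → ℤ := fun n => (SN n).2 with hN
  have hS0 : S 0 = 0 := rfl
  have hN0 : N 0 = 1 := rfl
  have hSsucc : ∀ K, S (K+1) = S K + N K * c K := fun K => rfl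
  have hNsucc : ∀ K, N (K+1) = N K * (2 * |S (K+1)| + 1) := fun K => rfl
  have hNpos : ∀ K, 0 < N K := by
    intro K; induction K with
    | zero => norm_num [hN0]
    | succ K ih =>
      rw [hNsucc]
      have : (0:ℤ) < 2 * |S (K+1)| + 1 := by positivity
      exact mul_pos ih this
  have hNdvd : ∀ {K L}, K ≤ L → N K ∣ N L := by
    intro K L h
    induction L, h using Nat.le_induction with
    | base => rfl
    | succ L hKL ih => exact ih.trans ⟨_, hNsucc L⟩
  have hNS : ∀ K, 2 * |S K| < N K := by
    intro K
    cases K with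
    | zero => simp [hS0, hN0]
    | succ K =>
      rw [hNsucc]
      have h1 := hNpos K
      nlinarith [abs_nonneg (S (K+1))]
  have hSmono : ∀ K, |S K| < |S (K+1)| := by
    intro K
    rw [hSsucc]
    have t1 : |N K * c K| ≤ |S K + N K * c K| + |S K| := by
      calc |N K * c K| = |(S K + N K * c K) + (-(S K))| := by ring_nf
        _ ≤ |S K + N K * c K| + |-(S K)| := abs_add_le _ _
        _ = |S K + N K * c K| + |S K| := by rw [abs_neg]
    have t2 : |N K * c K| = N K * |c K| := by
      rw [abs_mul, abs_of_pos (hNpos K)]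
    nlinarith [hc1 K, hNS K, hNpos K]
  have hSK : ∀ K : ℕ, (K : ℤ) ≤ |S K| := by
    intro K; induction K with
    | zero => simp
    | succ K ih => have := hSmono K; push_cast; omega
  have hSsum : ∀ K, S K = ∑ k ∈ Finset.range K, N k * c k := by
    intro K; induction K with
    | zero => simp [hS0]
    | succ K ih => rw [Finset.sum_range_succ, ← ih, hSsucc]
  set z : ℕ → ℤ := fun j => ∑ k ∈ Finset.range (j+1), N k * y k j with hz
  have key : ∀ K, ∃ t, φ z = S K + N K * t := by
    intro K
    set w : ℕ → ℤ := fun j => ∑ k ∈ Finset.Ico K (j+1), (N k / N K) * y k j with hw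
    have hzd : z = (∑ k ∈ Finset.range K, N k • y k) + N K • w := by
      funext j
      simp only [hz, hw, Pi.add_apply, Finset.sum_apply, Pi.smul_apply, smul_eq_mul]
      rw [Finset.mul_sum]
      rcases le_or_gt K (j+1) with hK | hK
      · rw [← Finset.sum_range_add_sum_Ico _ hK]
        congr 1
        refine Finset.sum_congr rfl fun k hk => ?_
        rw [← mul_assoc, Int.mul_ediv_cancel' (hNdvd (Finset.mem_Ico.mp hk).1)]
      · rw [Finset.Ico_eq_empty (by omega), Finset.sum_empty, add_zero]
        refine Finset.sum_subset (Finset.range_subset_range.mpr (by omega)) fun k _ hk => ?_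
        rw [hy k j (by simp at hk ⊢; omega), mul_zero]
    have := congrArg φ hzd
    rw [map_add, map_sum, map_zsmul, smul_eq_mul] at this
    refine ⟨φ w, ?_⟩
    rw [this, hSsum K]
    congr 1
    refine Finset.sum_congr rfl fun k _ => ?_
    rw [map_zsmul, smul_eq_mul]
  set m : ℕ := (φ z).natAbs with hm
  have habs : |φ z| = (m : ℤ) := by rw [hm, Int.abs_eq_natAbs]
  have hzero : ∀ K, m + 1 ≤ K → φ z = S K := by
    intro K hK
    obtain ⟨t, ht⟩ := key K
    have hb := hNS K
    have hk : ((K : ℤ)) ≤ |S K| := hSK K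
    have hp := hNpos K
    have e1 : |N K * t| = |φ z - S K| := by rw [ht]; ring_nf
    rw [abs_mul, abs_of_pos hp] at e1
    have e2 : |φ z - S K| ≤ |φ z| + |S K| := abs_sub _ _
    have hmK : (m : ℤ) + 1 ≤ (K : ℤ) := by exact_mod_cast hK
    have ht0 : t = 0 := by
      by_contra h0
      have : 1 ≤ |t| := Int.one_le_abs h0
      nlinarith [abs_nonneg t]
    rw [ht0, mul_zero, add_zero] at ht
    exact ht
  have e1 := hzero (m+1) le_rfl
  have e2 := hzero (m+2) (by omega)
  have := hSmono (m+1)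
  rw [← e1, ← e2] at this
  exact lt_irrefl _ this

/-- A hom vanishing on all basis vectors is zero. -/
theorem specker_zero (φ : (ℕ → ℤ) →+ ℤ) (h0 : ∀ n, φ (Pi.single n 1) = 0)
    (x : ℕ → ℤ) : φ x = 0 := by
  set y : ℕ → ℕ → ℤ := fun k j => if j < k then 0 else x j with hy
  have hsup : ∀ k j, j < k → y k j = 0 := fun k j h => by simp [hy, h]
  have hstep : ∀ k, φ (y k) = φ (y (k+1)) := by
    intro k
    have : y k = y (k+1) + (x k) • Pi.single k 1 := by
      funext j
      simp only [hy, Pi.add_apply, Pi.smul_apply, smul_eq_mul]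
      rcases lt_trichotomy j k with h | h | h
      · simp [h, h.trans (Nat.lt_succ_self k), Pi.single_apply, h.ne]
      · subst h; simp [Pi.single_apply]
      · simp [not_lt.mpr h.le, (not_lt.mpr h : ¬ j < k + 1), Pi.single_apply, h.ne']
    rw [this, map_add, map_zsmul, h0, smul_zero, add_zero]
  have hall : ∀ k, φ (y k) = φ x := by
    intro k; induction k with
    | zero =>
      have h00 : y 0 = x := funext fun j => by simp [hy]
      rw [h00]
    | succ k ih => rw [← hstep, ih]
  obtain ⟨k, hk⟩ := specker_core φ y hsup
  rw [hall k] at hk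
  exact hk

/-- Specker's theorem: `Hom(∏_ℕ ℤ, ℤ) ≅ ⊕_ℕ ℤ`, via restriction of a
functional to the standard basis vectors: the map `φ ↦ (n ↦ φ (e n))` (where
`e n = Pi.single n 1`) is injective, lands in the finitely supported sequences, and hits
every finitely supported sequence.  Equivalently, the evaluation map
`⊕_ℕ ℤ → Hom(Hom(⊕_ℕ ℤ, ℤ), ℤ)` into the double dual is an isomorphism. -/
theorem stmt13 :
    Function.Injective (fun (φ : (ℕ → ℤ) →+ ℤ) (n : ℕ) => φ (Pi.single n 1)) ∧
    (∀ φ : (ℕ → ℤ) →+ ℤ, {n : ℕ | φ (Pi.single n 1) ≠ 0}.Finite) ∧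
    (∀ g : ℕ → ℤ, {n : ℕ | g n ≠ 0}.Finite →
      ∃ φ : (ℕ → ℤ) →+ ℤ, ∀ n, φ (Pi.single n 1) = g n) := by
  refine ⟨?_, ?_, ?_⟩
  · intro φ ψ h
    ext x
    have h' : ∀ n, (φ - ψ) (Pi.single n 1) = 0 := by
      intro n
      have h2 : φ (Pi.single n 1) = ψ (Pi.single n 1) := congrFun h n
      simp only [AddMonoidHom.sub_apply, h2, sub_self]
    have h3 := specker_zero (φ - ψ) h' x
    simp only [AddMonoidHom.sub_apply, sub_eq_zero] at h3
    exact h3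
  · intro φ
    by_contra hinf
    replace hinf : {n : ℕ | φ (Pi.single n 1) ≠ 0}.Infinite := hinf
    have hex : ∀ k : ℕ, ∃ n, k ≤ n ∧ φ (Pi.single n 1) ≠ 0 := by
      intro k
      have : ({n : ℕ | φ (Pi.single n 1) ≠ 0} \ Finset.range k).Nonempty := by
        apply Set.Infinite.nonempty
        exact hinf.diff (Finset.range k).finite_toSet
      obtain ⟨n, hn⟩ := this
      refine ⟨n, ?_, hn.1⟩
      have := hn.2
      simp at this
      omega
    choose f hf1 hf2 using hex
    obtain ⟨k, hk⟩ := specker_core φ (fun k => Pi.single (f k) 1)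
      (fun k j hj => Pi.single_eq_of_ne (by have := hf1 k; omega) 1)
    exact hf2 k hk
  · intro g hg
    refine ⟨{ toFun := fun x => ∑ n ∈ hg.toFinset, g n * x n,
              map_zero' := by simp,
              map_add' := by
                intro x y
                simp [mul_add, Finset.sum_add_distrib] }, ?_⟩
    intro n
    simp only [AddMonoidHom.coe_mk, ZeroHom.coe_mk]
    rcases em (n ∈ hg.toFinset) with hn | hn
    · rw [Finset.sum_eq_single n]
      · simp
      · intro b _ hb; simp [Pi.single_apply, hb]
      · intro h; exact absurd hn h
    · have hg0 : g n = 0 := by simpa using hn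
      rw [hg0]
      apply Finset.sum_eq_zero
      intro b hb
      have : b ≠ n := fun h => hn (h ▸ hb)
      simp [Pi.single_apply, this.symm]
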